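/- Let U be a finite set with |U| ≥ 2, let p ∈ U, let β ≥ 1, and let z be a nonnegative weight vector such that Σ_{E∈𝒞_S, p∉E} z_E > 0 for every S ⊆ U with |S| ≥ 2. Suppose that at every nondegenerate nonnegative weight vector, ∂f(U)/∂z_T ≤ β holds for every T ⊆ U with p ∈ T. Then f(U) ≤ β · ℓ(p) at z. -/

import Mathlib

open Finset

variable {α : Type*} [Fintype α] [DecidableEq α]

/-- `E` crosses `S` if both `S ∩ E` and `S \ E` are nonempty. -/
def Crosses (E S : Finset α) : Prop := (S ∩ E).Nonempty ∧ (S \ E).Nonempty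

instance (E S : Finset α) : Decidable (Crosses E S) := by unfold Crosses; infer_instance

/-- The family of subsets of the ground set crossing `S`. -/
def crossers (S : Finset α) : Finset (Finset α) := univ.filter (fun E => Crosses E S)

/-- `ℓ(p)`: total weight of the sets containing `p`. -/
def ell (z : Finset α → ℝ) (p : α) : ℝ := ∑ E ∈ univ.filter (fun E => p ∈ E), z E

lemma card_sdiff_lt_of_mem_crossers {E S : Finset α} (h : E ∈ crossers S) :
    (S \ E).card < S.card := by
  have h' : Crosses E S := by unfold crossers at h; exact (mem_filter.mp h).2
  obtain ⟨x, hx⟩ := h'.1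
  refine card_lt_card ((ssubset_iff_of_subset sdiff_subset).mpr ?_)
  exact ⟨x, (mem_inter.mp hx).1, fun hmem => (mem_sdiff.mp hmem).2 (mem_inter.mp hx).2⟩

/-- The function `f(S)` from the Closest Point Process. -/
noncomputable def fval (z : Finset α → ℝ) (S : Finset α) : ℝ :=
  if S.card ≤ 1 then ∑ p ∈ S, ell z p
  else if 0 < ∑ E ∈ crossers S, z E then
    (∑ E ∈ (crossers S).attach, z E.1 * fval z (S \ E.1)) / (∑ E ∈ crossers S, z E)
  else 0
termination_by S.card
decreasing_by exact card_sdiff_lt_of_mem_crossers E.2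

/-- A weight vector is nondegenerate if every `S` with `|S| ≥ 2` has positive crossing weight. -/
def Nondeg (z : Finset α → ℝ) : Prop :=
  ∀ S : Finset α, 2 ≤ S.card → 0 < ∑ E ∈ crossers S, z E

/-- The partial derivative `∂f(S)/∂z_T`. -/
noncomputable def pderivf (S T : Finset α) (z : Finset α → ℝ) : ℝ :=
  fderiv ℝ (fun w : Finset α → ℝ => fval w S) z (Pi.single T 1)

/-- The pseudo-derivative `∂̂f(S)/∂̂z_T`. -/
noncomputable def pdhat (z : Finset α → ℝ) (S T : Finset α) : ℝ :=
  if S ⊆ T then 1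
  else if S ∩ T = ∅ then 0
  else (∑ E ∈ (crossers S).attach, z E.1 * pdhat z (S \ E.1) T
        + fval z (S \ T) - ∑ E ∈ univ.filter (fun E => S ⊆ E), z E)
       / (∑ E ∈ crossers S, z E)
termination_by S.card
decreasing_by exact card_sdiff_lt_of_mem_crossers E.2

/-- The `m`-th harmonic number. -/
noncomputable def harm (m : ℕ) : ℝ := ∑ j ∈ Finset.range m, 1 / ((j : ℝ) + 1)

-- auxiliary
lemma sdiff_ssubset_of_mem_crossers {E S : Finset α} (h : E ∈ crossers S) :
    S \ E ⊂ S := by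
  have h' : Crosses E S := by unfold crossers at h; exact (mem_filter.mp h).2
  obtain ⟨x, hx⟩ := h'.1
  refine (ssubset_iff_of_subset sdiff_subset).mpr ?_
  exact ⟨x, (mem_inter.mp hx).1, fun hmem => (mem_sdiff.mp hmem).2 (mem_inter.mp hx).2⟩

lemma fval_diff (S : Finset α) : ∀ w : Finset α → ℝ, Nondeg w →
    DifferentiableAt ℝ (fun z : Finset α → ℝ => fval z S) w := by
  induction S using Finset.strongInduction with
  | _ S IH =>
    intro w hw
    by_cases h1 : S.card ≤ 1
    · have : (fun z : Finset α → ℝ => fval z S) = fun z => ∑ q ∈ S, ell z q := by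
        funext zz; rw [fval, if_pos h1]
      rw [this]
      exact DifferentiableAt.fun_sum fun q _ => DifferentiableAt.fun_sum fun E _ =>
        (ContinuousLinearMap.proj (R := ℝ) (φ := fun _ : Finset α => ℝ) E).differentiableAt
    · have hden : 0 < ∑ E ∈ crossers S, w E := hw S (by omega)
      have hcont : Continuous fun z : Finset α → ℝ => ∑ E ∈ crossers S, z E :=
        continuous_finset_sum _ fun E _ => continuous_apply E
      have hopen : IsOpen {z : Finset α → ℝ | 0 < ∑ E ∈ crossers S, z E} :=
        isOpen_lt continuous_const hcont
      have hev : (fun z : Finset α → ℝ => fval z S) =ᶠ[nhds w]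
          fun z => (∑ E ∈ (crossers S).attach, z E.1 * fval z (S \ E.1)) /
            (∑ E ∈ crossers S, z E) := by
        filter_upwards [hopen.mem_nhds hden] with zz hzz
        rw [fval, if_neg h1, if_pos hzz]
      rw [hev.differentiableAt_iff]
      have hnum : DifferentiableAt ℝ
          (fun z : Finset α → ℝ => ∑ E ∈ (crossers S).attach, z E.1 * fval z (S \ E.1)) w :=
        DifferentiableAt.fun_sum fun E _ =>
          ((ContinuousLinearMap.proj (R := ℝ) (φ := fun _ : Finset α => ℝ) E.1).differentiableAt).mul
            (IH (S \ E.1) (sdiff_ssubset_of_mem_crossers E.2) w hw)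
      have hd : DifferentiableAt ℝ (fun z : Finset α → ℝ => ∑ E ∈ crossers S, z E) w :=
        DifferentiableAt.fun_sum fun E _ =>
          (ContinuousLinearMap.proj (R := ℝ) (φ := fun _ : Finset α => ℝ) E).differentiableAt
      simp only [div_eq_mul_inv]
      exact hnum.mul (hd.inv (ne_of_gt hden))


lemma fval_zero (p' : α) (w : Finset α → ℝ) (hw0 : ∀ E : Finset α, p' ∈ E → w E = 0) :
    ∀ S : Finset α, p' ∈ S → fval w S = 0 := by
  intro S
  induction S using Finset.strongInduction with
  | _ S IH =>
    intro hpS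
    by_cases h1 : S.card ≤ 1
    · have hS : S = {p'} := by
        apply Finset.eq_singleton_iff_unique_mem.mpr
        refine ⟨hpS, fun x hx => ?_⟩
        by_contra hne
        have : 2 ≤ S.card := Finset.one_lt_card.mpr ⟨x, hx, p', hpS, hne⟩
        omega
      rw [fval, if_pos h1, hS]
      simp only [Finset.sum_singleton, ell]
      exact Finset.sum_eq_zero fun E hE => hw0 E (Finset.mem_filter.mp hE).2
    · rw [fval, if_neg h1]
      split
      · rw [Finset.sum_eq_zero, zero_div]
        intro E _
        by_cases hpE : p' ∈ E.1
        · rw [hw0 E.1 hpE, zero_mul]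
        · rw [IH (S \ E.1) (sdiff_ssubset_of_mem_crossers E.2)
            (Finset.mem_sdiff.mpr ⟨hpS, hpE⟩), mul_zero]
      · rfl

/-- if the partial derivative `∂f(U)/∂z_T` is at most `β` for every
`T ∋ p` at every nondegenerate nonnegative weight vector, then `f(U) ≤ β·ℓ(p)`. -/
theorem stmt5 {α : Type*} [Fintype α] [DecidableEq α]
    (hU : 2 ≤ Fintype.card α) (p : α) (β : ℝ) (hβ : 1 ≤ β)
    (z : Finset α → ℝ) (hz : ∀ E : Finset α, 0 ≤ z E)
    (hpos : ∀ S : Finset α, 2 ≤ S.card →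
      0 < ∑ E ∈ (crossers S).filter (fun E => p ∉ E), z E)
    (hderiv : ∀ w : Finset α → ℝ, (∀ E : Finset α, 0 ≤ w E) → Nondeg w →
      ∀ T : Finset α, p ∈ T → pderivf Finset.univ T w ≤ β) :
    fval z Finset.univ ≤ β * ell z p := by
  classical
  set v : Finset α → ℝ := fun E => if p ∈ E then z E else 0 with hv
  set z0 : Finset α → ℝ := fun E => if p ∈ E then 0 else z E with hz0
  set path : ℝ → (Finset α → ℝ) := fun t => z0 + t • v with hpathdef
  have hpath : ∀ t E, path t E = if p ∈ E then t * z E else z E := by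
    intro t E
    simp only [hpathdef, hz0, hv, Pi.add_apply, Pi.smul_apply, smul_eq_mul]
    split <;> ring
  have hnonneg : ∀ t : ℝ, 0 ≤ t → ∀ E, 0 ≤ path t E := by
    intro t ht E
    rw [hpath]
    split
    · exact mul_nonneg ht (hz E)
    · exact hz E
  have hnd : ∀ t : ℝ, 0 ≤ t → Nondeg (path t) := by
    intro t ht S hS
    have h1 : ∑ E ∈ (crossers S).filter (fun E => p ∉ E), z E
        = ∑ E ∈ (crossers S).filter (fun E => p ∉ E), path t E := by
      refine Finset.sum_congr rfl fun E hE => ?_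
      rw [hpath, if_neg (Finset.mem_filter.mp hE).2]
    have h2 : ∑ E ∈ (crossers S).filter (fun E => p ∉ E), path t E
        ≤ ∑ E ∈ crossers S, path t E :=
      Finset.sum_le_sum_of_subset_of_nonneg (Finset.filter_subset _ _)
        (fun E _ _ => hnonneg t ht E)
    calc (0:ℝ) < _ := hpos S hS
    _ = _ := h1
    _ ≤ _ := h2
  have hpder : ∀ t : ℝ, HasDerivAt path v t := by
    intro t
    have h := ((hasDerivAt_id t).smul_const v).const_add z0
    simpa [hpathdef] using h
  set γ : ℝ → ℝ := fun t => fval (path t) Finset.univ with hγ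
  set g : ℝ → ℝ := fun t => fderiv ℝ (fun w : Finset α → ℝ => fval w Finset.univ) (path t) v
    with hg
  have hγd : ∀ t : ℝ, 0 ≤ t → HasDerivAt γ (g t) t := by
    intro t ht
    have hdw : DifferentiableAt ℝ (fun w : Finset α → ℝ => fval w Finset.univ) (path t) :=
      fval_diff Finset.univ (path t) (hnd t ht)
    exact hdw.hasFDerivAt.comp_hasDerivAt t (hpder t)
  -- bound on g t for t ≥ 0
  have hvsum : v = ∑ T ∈ Finset.univ.filter (fun T => p ∈ T), Pi.single T (z T) := by
    funext E
    rw [Finset.sum_apply]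
    simp only [Pi.single_apply]
    rw [Finset.sum_ite_eq (Finset.univ.filter (fun T => p ∈ T)) E z]
    by_cases hpE : p ∈ E <;> simp [hv, hpE]
  have hgbound : ∀ t : ℝ, 0 ≤ t → g t ≤ β * ell z p := by
    intro t ht
    set D := fderiv ℝ (fun w : Finset α → ℝ => fval w Finset.univ) (path t) with hD
    have : g t = ∑ T ∈ Finset.univ.filter (fun T => p ∈ T), z T * D (Pi.single T 1) := by
      rw [hg]
      simp only [← hD, hvsum, map_sum]
      refine Finset.sum_congr rfl fun T _ => ?_
      have : Pi.single T (z T) = z T • (Pi.single T 1 : Finset α → ℝ) := by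
        funext x
        by_cases h : x = T <;> simp [Pi.single_apply, h]
      rw [this, map_smul, smul_eq_mul]
    rw [this]
    have hle : ∀ T ∈ Finset.univ.filter (fun T => p ∈ T), z T * D (Pi.single T 1) ≤ z T * β := by
      intro T hT
      exact mul_le_mul_of_nonneg_left
        (hderiv (path t) (hnonneg t ht) (hnd t ht) T (Finset.mem_filter.mp hT).2) (hz T)
    calc ∑ T ∈ Finset.univ.filter (fun T => p ∈ T), z T * D (Pi.single T 1)
        ≤ ∑ T ∈ Finset.univ.filter (fun T => p ∈ T), z T * β := Finset.sum_le_sum hle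
      _ = β * ell z p := by rw [← Finset.sum_mul, ell, mul_comm]
  -- endpoints
  have hpath1 : path 1 = z := by
    funext E; rw [hpath]; by_cases hpE : p ∈ E <;> simp [hpE]
  have hpath0 : path 0 = z0 := by
    funext E; rw [hpath]; by_cases hpE : p ∈ E <;> simp [hz0, hpE]
  have hγ0 : γ 0 = 0 := by
    rw [hγ]
    simp only [hpath0]
    exact fval_zero p z0 (fun E hE => by simp [hz0, hE]) Finset.univ (Finset.mem_univ p)
  have hγ1 : γ 1 = fval z Finset.univ := by rw [hγ]; simp only [hpath1]
  obtain ⟨c, hc, hceq⟩ := exists_hasDerivAt_eq_slope γ g one_pos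
    (fun t ht => (hγd t ht.1).continuousAt.continuousWithinAt)
    (fun t ht => hγd t (le_of_lt ht.1))
  have : γ 1 - γ 0 = g c := by rw [hceq]; ring
  have hfin : fval z Finset.univ = g c := by rw [← hγ1, ← this, hγ0, sub_zero]
  rw [hfin]
  exact hgbound c (le_of_lt hc.1)
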